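/- Let G: (−∞, x₂] → M₂(ℂ) be continuous with ‖G(x)‖ ≤ c·e^{dx} for some c, d > 0, and let f solve the linear ODE f′(x) = G(x) f(x) on (−∞, x₂] with f not identically zero. Then the limit f₀ = lim_{x→−∞} f(x) exists, f₀ ≠ 0, and ‖f(x) − f₀‖ ≤ C·e^{dx} for some constant C > 0 and all x ≤ x₂. -/

import Mathlib

open Filter Matrix Topology

section aux

lemma aux_cont_exp (d : ℝ) : Continuous fun t => Real.exp (d * t) :=
  Real.continuous_exp.comp (continuous_const.mul continuous_id)

lemma aux_deriv_exp {d : ℝ} (hd : 0 < d) (t : ℝ) :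
    HasDerivAt (fun u => Real.exp (d * u) / d) (Real.exp (d * t)) t := by
  have h1 : HasDerivAt (fun u => Real.exp (d * u)) (Real.exp (d * t) * d) t := by
    simpa [Function.comp_def] using (Real.hasDerivAt_exp (d * t)).comp t ((hasDerivAt_id t).const_mul d)
  have := h1.div_const d
  rwa [mul_div_assoc, div_self hd.ne', mul_one] at this

lemma aux_intInt_exp {d : ℝ} (hd : 0 < d) (a b : ℝ) :
    ∫ t in a..b, Real.exp (d * t) = (Real.exp (d * b) - Real.exp (d * a)) / d := by
  rw [intervalIntegral.integral_eq_sub_of_hasDerivAt (fun t _ => aux_deriv_exp hd t)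
    ((aux_cont_exp d).intervalIntegrable a b)]
  ring

lemma aux_intOn_exp {d : ℝ} (hd : 0 < d) (x : ℝ) :
    MeasureTheory.IntegrableOn (fun t => Real.exp (d * t)) (Set.Iic x) := by
  apply MeasureTheory.integrableOn_Iic_of_intervalIntegral_norm_bounded
    (Real.exp (d * x) / d) x (a := fun i : ℝ => i) (l := atBot)
    (fun i => (aux_cont_exp d).integrableOn_Ioc) tendsto_id
  filter_upwards with i
  have hn : ∀ t : ℝ, ‖Real.exp (d * t)‖ = Real.exp (d * t) := fun t => by
    rw [Real.norm_eq_abs, Real.abs_exp]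
  simp only [hn]
  rw [aux_intInt_exp hd]
  gcongr
  linarith [Real.exp_pos (d * i)]

lemma aux_int_exp_Iic {d : ℝ} (hd : 0 < d) (x : ℝ) :
    ∫ t in Set.Iic x, Real.exp (d * t) = Real.exp (d * x) / d := by
  have htend : Tendsto (fun u => Real.exp (d * u) / d) atBot (𝓝 0) := by
    have h1 : Tendsto (fun x : ℝ => d * x) atBot atBot :=
      Tendsto.const_mul_atBot hd tendsto_id
    simpa using (Real.tendsto_exp_atBot.comp h1).div_const d
  have := MeasureTheory.integral_Iic_of_hasDerivAt_of_tendsto (a := x)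
    (f := fun u => Real.exp (d * u) / d) (f' := fun t => Real.exp (d * t)) (m := 0)
    ((aux_cont_exp d).div_const d).continuousWithinAt
    (fun t _ => aux_deriv_exp hd t) (aux_intOn_exp hd x) htend
  rw [this, sub_zero]

end aux

/-- A 2×2 first-order linear ODE system `f' = G f` on `(-∞, x₂]` whose coefficient
matrix decays exponentially as `x → -∞` has solutions converging exponentially to
nonzero constant vectors. -/
theorem stmt_10 (x₂ c d : ℝ) (hc : 0 < c) (hd : 0 < d)
    (G : ℝ → ((Fin 2 → ℂ) →L[ℂ] (Fin 2 → ℂ)))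
    (hGcont : ContinuousOn G (Set.Iic x₂))
    (hGbound : ∀ x ≤ x₂, ‖G x‖ ≤ c * Real.exp (d * x))
    (f : ℝ → Fin 2 → ℂ)
    (hf : ∀ x ≤ x₂, HasDerivAt f (G x (f x)) x)
    (hne : ∃ x ≤ x₂, f x ≠ 0) :
    ∃ f₀ : Fin 2 → ℂ, f₀ ≠ 0 ∧ Tendsto f atBot (nhds f₀) ∧
      ∃ C > 0, ∀ x ≤ x₂, ‖f x - f₀‖ ≤ C * Real.exp (d * x) := by
  obtain ⟨xw, hxw, hfxw⟩ := hne
  set g : ℝ → Fin 2 → ℂ := fun x => G x (f x) with hgdef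
  have hfc : ContinuousOn f (Set.Iic x₂) := fun x hx =>
    (hf x hx).continuousAt.continuousWithinAt
  have hgc : ContinuousOn g (Set.Iic x₂) := hGcont.clm_apply hfc
  have hgb : ∀ x, x ≤ x₂ → ‖g x‖ ≤ c * Real.exp (d * x) * ‖f x‖ := by
    intro x hx
    calc ‖G x (f x)‖ ≤ ‖G x‖ * ‖f x‖ := (G x).le_opNorm _
    _ ≤ c * Real.exp (d * x) * ‖f x‖ :=
        mul_le_mul_of_nonneg_right (hGbound x hx) (norm_nonneg _)
  -- FTC on intervals
  have hFTC : ∀ x y : ℝ, x ≤ y → y ≤ x₂ → ∫ t in x..y, g t = f y - f x := by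
    intro x y hxy hy
    apply intervalIntegral.integral_eq_sub_of_hasDerivAt
    · intro t ht
      rw [Set.uIcc_of_le hxy] at ht
      exact hf t (ht.2.trans hy)
    · apply (hgc.mono ?_).intervalIntegrable
      rw [Set.uIcc_of_le hxy]
      exact fun t ht => (ht.2.trans hy)
  -- choose x₁ with small contraction constant
  obtain ⟨x₁, hx₁small, hx₁2⟩ : ∃ x₁, c * Real.exp (d * x₁) / d ≤ 1/2 ∧ x₁ ≤ x₂ := by
    have h1 : Tendsto (fun x : ℝ => d * x) atBot atBot :=
      Tendsto.const_mul_atBot hd tendsto_id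
    have h2 : Tendsto (fun x : ℝ => c * Real.exp (d * x) / d) atBot (𝓝 0) := by
      simpa using ((Real.tendsto_exp_atBot.comp h1).const_mul c).div_const d
    exact ((h2.eventually_le_const (by norm_num : (0:ℝ) < 1/2)).and
      (eventually_le_atBot x₂)).exists
  -- key contraction estimate
  have est : ∀ a b S : ℝ, a ≤ b → b ≤ x₁ → 0 ≤ S →
      (∀ s ∈ Set.Icc a b, ‖f s‖ ≤ S) → ‖∫ t in a..b, g t‖ ≤ S / 2 := by
    intro a b S hab hbx hS hfS
    have hsub : Set.uIcc a b ⊆ Set.Iic x₂ := by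
      rw [Set.uIcc_of_le hab]
      exact fun s hs => hs.2.trans (hbx.trans hx₁2)
    have hgint : IntervalIntegrable g MeasureTheory.volume a b :=
      (hgc.mono hsub).intervalIntegrable
    calc ‖∫ t in a..b, g t‖ ≤ ∫ t in a..b, ‖g t‖ :=
          intervalIntegral.norm_integral_le_integral_norm hab
    _ ≤ ∫ t in a..b, (c * S) * Real.exp (d * t) := by
        apply intervalIntegral.integral_mono_on hab hgint.norm
          ((continuous_const.mul (aux_cont_exp d)).intervalIntegrable a b : IntervalIntegrable (fun t => (c*S) * Real.exp (d*t)) MeasureTheory.volume a b)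
        intro s hs
        have h1 := hgb s ((hs.2.trans hbx).trans hx₁2)
        have h2 : c * Real.exp (d * s) * ‖f s‖ ≤ c * Real.exp (d * s) * S :=
          mul_le_mul_of_nonneg_left (hfS s hs) (by positivity)
        calc ‖g s‖ ≤ c * Real.exp (d * s) * S := h1.trans h2
        _ = (c * S) * Real.exp (d * s) := by ring
    _ = (c * S) * ((Real.exp (d * b) - Real.exp (d * a)) / d) := by
        rw [intervalIntegral.integral_const_mul, aux_intInt_exp hd]
    _ ≤ S / 2 := by
        have h4 : Real.exp (d * b) ≤ Real.exp (d * x₁) :=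
          Real.exp_le_exp.2 (mul_le_mul_of_nonneg_left hbx hd.le)
        have h7 : Real.exp (d * b) - Real.exp (d * a) ≤ Real.exp (d * x₁) := by
          linarith [Real.exp_pos (d * a)]
        have h5 : c * Real.exp (d * x₁) ≤ 1/2 * d := (div_le_iff₀ hd).1 hx₁small
        have h8 : (c * S) * (Real.exp (d * b) - Real.exp (d * a)) ≤
            (c * S) * Real.exp (d * x₁) :=
          mul_le_mul_of_nonneg_left h7 (by positivity)
        have h9 : S * (c * Real.exp (d * x₁)) ≤ S * (1/2 * d) :=
          mul_le_mul_of_nonneg_left h5 hS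
        rw [← mul_div_assoc, div_le_div_iff₀ hd (by norm_num : (0:ℝ) < 2)]
        nlinarith
  -- boundedness below x₁
  have hbdd₁ : ∀ t, t ≤ x₁ → ‖f t‖ ≤ 2 * ‖f x₁‖ := by
    intro y hy
    obtain ⟨t', ht'mem, ht'max⟩ := IsCompact.exists_isMaxOn (isCompact_Icc (a := y) (b := x₁))
      ⟨y, le_refl y, hy⟩
      (continuous_norm.comp_continuousOn (hfc.mono (fun s hs => hs.2.trans hx₁2)))
    set S := ‖f t'‖ with hSdef
    have hSmax : ∀ s ∈ Set.Icc y x₁, ‖f s‖ ≤ S := fun s hs => ht'max hs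
    have hSnn : 0 ≤ S := norm_nonneg _
    have h1 : f x₁ - f t' = ∫ t in t'..x₁, g t := (hFTC t' x₁ ht'mem.2 hx₁2).symm
    have h2 : ‖∫ t in t'..x₁, g t‖ ≤ S / 2 :=
      est t' x₁ S ht'mem.2 le_rfl hSnn (fun s hs => hSmax s ⟨ht'mem.1.trans hs.1, hs.2⟩)
    have h3 : S ≤ ‖f x₁‖ + S / 2 := by
      have heq : f t' = f x₁ - (f x₁ - f t') := by abel
      calc S = ‖f x₁ - (f x₁ - f t')‖ := by rw [hSdef, ← heq]
      _ = ‖f x₁ - ∫ t in t'..x₁, g t‖ := by rw [h1]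
      _ ≤ ‖f x₁‖ + ‖∫ t in t'..x₁, g t‖ := norm_sub_le _ _
      _ ≤ ‖f x₁‖ + S / 2 := by linarith
    have hfy : ‖f y‖ ≤ S := hSmax y ⟨le_refl y, hy⟩
    linarith
  -- global bound M
  obtain ⟨M₀, hM₀⟩ : ∃ M₀, ∀ t ∈ Set.Icc x₁ x₂, ‖f t‖ ≤ M₀ :=
    (isCompact_Icc).exists_bound_of_continuousOn (hfc.mono (fun s hs => hs.2))
  set M : ℝ := max M₀ (2 * ‖f x₁‖) with hMdef
  have hM : ∀ t, t ≤ x₂ → ‖f t‖ ≤ M := by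
    intro t ht
    rcases le_total t x₁ with h | h
    · exact (hbdd₁ t h).trans (le_max_right _ _)
    · exact (hM₀ t ⟨h, ht⟩).trans (le_max_left _ _)
  have hMnn : 0 ≤ M := (norm_nonneg (f x₂)).trans (hM x₂ le_rfl)
  have hgbM : ∀ t, t ≤ x₂ → ‖g t‖ ≤ (c * M) * Real.exp (d * t) := by
    intro t ht
    calc ‖g t‖ ≤ c * Real.exp (d * t) * ‖f t‖ := hgb t ht
    _ ≤ c * Real.exp (d * t) * M := mul_le_mul_of_nonneg_left (hM t ht) (by positivity)
    _ = (c * M) * Real.exp (d * t) := by ring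
  -- g integrable on Iic x₂
  have hgint : MeasureTheory.IntegrableOn g (Set.Iic x₂) := by
    refine MeasureTheory.integrableOn_Iic_of_intervalIntegral_norm_bounded
      ((c * M) * (Real.exp (d * x₂) / d)) x₂ (a := fun i : ℝ => i) (l := atBot)
      (fun i => ?_) tendsto_id ?_
    · exact ((hgc.mono (fun s hs => hs.2)).integrableOn_compact
        (isCompact_Icc (a := i) (b := x₂))).mono_set Set.Ioc_subset_Icc_self
    · filter_upwards [eventually_le_atBot x₂] with i hi
      have hsub : Set.uIcc i x₂ ⊆ Set.Iic x₂ := by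
        rw [Set.uIcc_of_le hi]; exact fun s hs => hs.2
      have step1 : ∫ t in i..x₂, ‖g t‖ ≤ ∫ t in i..x₂, (c * M) * Real.exp (d * t) := by
        apply intervalIntegral.integral_mono_on hi ((hgc.mono hsub).intervalIntegrable).norm
          ((continuous_const.mul (aux_cont_exp d)).intervalIntegrable i x₂ :
            IntervalIntegrable (fun t => (c*M) * Real.exp (d*t)) MeasureTheory.volume i x₂)
        exact fun s hs => hgbM s hs.2
      have step2 : ∫ t in i..x₂, (c * M) * Real.exp (d * t)
          = (c * M) * ((Real.exp (d * x₂) - Real.exp (d * i)) / d) := by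
        rw [intervalIntegral.integral_const_mul, aux_intInt_exp hd]
      have step3 : (c * M) * ((Real.exp (d * x₂) - Real.exp (d * i)) / d)
          ≤ (c * M) * (Real.exp (d * x₂) / d) := by
        apply mul_le_mul_of_nonneg_left _ (by positivity)
        gcongr
        linarith [Real.exp_pos (d * i)]
      linarith [step1, step2, step3, step2 ▸ step3]
  -- limit exists
  have htend : Tendsto f atBot (𝓝 (limUnder atBot f)) :=
    MeasureTheory.tendsto_limUnder_of_hasDerivAt_of_integrableOn_Iic
      (fun x hx => hf x hx) hgint
  set f₀ := limUnder atBot f with hf₀def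
  -- identity  f x - f₀ = ∫_{Iic x} g
  have hid : ∀ x, x ≤ x₂ → ∫ t in Set.Iic x, g t = f x - f₀ := by
    intro x hx
    exact MeasureTheory.integral_Iic_of_hasDerivAt_of_tendsto
      ((hf x hx).continuousAt.continuousWithinAt)
      (fun t ht => hf t (ht.out.le.trans hx))
      (hgint.mono_set (Set.Iic_subset_Iic.2 hx)) htend
  -- exponential bound
  have hbound : ∀ x, x ≤ x₂ → ‖f x - f₀‖ ≤ (c * M / d) * Real.exp (d * x) := by
    intro x hx
    rw [← hid x hx]
    have hint2 : MeasureTheory.Integrable (fun t => (c * M) * Real.exp (d * t))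
        (MeasureTheory.volume.restrict (Set.Iic x)) :=
      (aux_intOn_exp hd x).const_mul (c * M)
    calc ‖∫ t in Set.Iic x, g t‖ ≤ ∫ t in Set.Iic x, (c * M) * Real.exp (d * t) := by
          apply MeasureTheory.norm_integral_le_of_norm_le hint2
          refine (MeasureTheory.ae_restrict_iff' measurableSet_Iic).2
            (Filter.Eventually.of_forall ?_)
          exact fun t ht => hgbM t (ht.out.trans hx)
    _ = (c * M) * (Real.exp (d * x) / d) := by
          rw [MeasureTheory.integral_const_mul, aux_int_exp_Iic hd]
    _ = (c * M / d) * Real.exp (d * x) := by ring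
  -- the limit is nonzero
  have hf₀ne : f₀ ≠ 0 := by
    intro h0
    have hvan : ∀ t, t ≤ x₁ → f t = 0 := by
      intro t ht
      have key : ∀ y, y ≤ t → ‖f t‖ ≤ 2 * ((c * M / d) * Real.exp (d * y)) := by
        intro y hy
        obtain ⟨t', ht'mem, ht'max⟩ := IsCompact.exists_isMaxOn
          (isCompact_Icc (a := y) (b := x₁)) ⟨y, le_refl y, hy.trans ht⟩
          (continuous_norm.comp_continuousOn (hfc.mono (fun s hs => hs.2.trans hx₁2)))
        set S := ‖f t'‖ with hSdef
        have hSmax : ∀ s ∈ Set.Icc y x₁, ‖f s‖ ≤ S := fun s hs => ht'max hs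
        have hSnn : 0 ≤ S := norm_nonneg _
        have h1 : f t' - f y = ∫ u in y..t', g u :=
          (hFTC y t' ht'mem.1 (ht'mem.2.trans hx₁2)).symm
        have h2 : ‖∫ u in y..t', g u‖ ≤ S / 2 :=
          est y t' S ht'mem.1 ht'mem.2 hSnn
            (fun s hs => hSmax s ⟨hs.1, hs.2.trans ht'mem.2⟩)
        have hfy : ‖f y‖ ≤ (c * M / d) * Real.exp (d * y) := by
          have := hbound y ((hy.trans ht).trans hx₁2)
          rwa [h0, sub_zero] at this
        have h3 : S ≤ (c * M / d) * Real.exp (d * y) + S / 2 := by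
          have heq : f t' = f y + (f t' - f y) := by abel
          calc S = ‖f y + (f t' - f y)‖ := by rw [hSdef, ← heq]
          _ = ‖f y + ∫ u in y..t', g u‖ := by rw [h1]
          _ ≤ ‖f y‖ + ‖∫ u in y..t', g u‖ := norm_add_le _ _
          _ ≤ (c * M / d) * Real.exp (d * y) + S / 2 := add_le_add hfy h2
        have h4 : ‖f t‖ ≤ S := hSmax t ⟨hy, ht⟩
        linarith
      have htends0 : Tendsto (fun y => 2 * ((c * M / d) * Real.exp (d * y)))
          atBot (𝓝 0) := by
        have h1 : Tendsto (fun x : ℝ => d * x) atBot atBot :=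
          Tendsto.const_mul_atBot hd tendsto_id
        simpa using (((Real.tendsto_exp_atBot.comp h1).const_mul (c * M / d)).const_mul 2)
      have hle : ‖f t‖ ≤ 0 := ge_of_tendsto htends0 (by
        filter_upwards [eventually_le_atBot t] with y hy
        exact key y hy)
      exact norm_le_zero_iff.1 hle
    have hgron := norm_le_gronwallBound_of_norm_deriv_right_le (f := f) (f' := g)
      (δ := 0) (K := c * Real.exp (d * x₂)) (ε := 0) (a := x₁) (b := x₂)
      (hfc.mono (fun s hs => hs.2))
      (fun x hx => (hf x hx.2.le).hasDerivWithinAt)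
      (by rw [hvan x₁ le_rfl]; simp)
      (fun x hx => by
        have h1 := hgb x hx.2.le
        have h2 : Real.exp (d * x) ≤ Real.exp (d * x₂) :=
          Real.exp_le_exp.2 (mul_le_mul_of_nonneg_left hx.2.le hd.le)
        have h3 : c * Real.exp (d * x) * ‖f x‖ ≤ c * Real.exp (d * x₂) * ‖f x‖ :=
          mul_le_mul_of_nonneg_right
            (mul_le_mul_of_nonneg_left h2 hc.le) (norm_nonneg _)
        rw [add_zero]
        exact h1.trans h3)
    rcases le_total xw x₁ with h | h
    · exact hfxw (hvan xw h)
    · have := hgron xw ⟨h, hxw⟩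
      rw [gronwallBound_ε0_δ0] at this
      exact hfxw (norm_le_zero_iff.1 this)
  refine ⟨f₀, hf₀ne, htend, c * M / d + 1, ?_, fun x hx => ?_⟩
  · have : (0:ℝ) ≤ c * M / d := by positivity
    linarith
  · have h1 := hbound x hx
    have h2 := (Real.exp_pos (d * x)).le
    nlinarith
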